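/- Let R be a right Noetherian domain, i.e. a nontrivial (not necessarily commutative) ring without zero divisors in which every ascending chain of right ideals stabilizes. Then the set of nonzero elements of R satisfies the right Ore condition: for every a ∈ R and every nonzero s ∈ R, there exist t, r ∈ R with t ≠ 0 and a·t = s·r. -/

import Mathlib

/-- Key induction: a dependence of `a*s^n` on lower powers yields a left Ore pair. -/
lemma ore_key {S : Type*} [Ring S] [NoZeroDivisors S] (a s : S) (ha : a ≠ 0) (hs : s ≠ 0) :
    ∀ (n : ℕ) (c : ℕ → S),
      (∑ i ∈ Finset.range n, c i * (a * s ^ i)) = a * s ^ n →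
      ∃ t r : S, t ≠ 0 ∧ t * a = r * s := by
  intro n
  induction n with
  | zero =>
      intro c hc
      simp at hc
      exact absurd hc.symm ha
  | succ n ih =>
      intro c hc
      rw [Finset.sum_range_succ'] at hc
      by_cases h0 : c 0 = 0
      · -- cancel s on the right and use IH
        apply ih (fun i => c (i + 1))
        have : (∑ i ∈ Finset.range n, c (i + 1) * (a * s ^ i)) * s = (a * s ^ n) * s := by
          rw [Finset.sum_mul]
          rw [h0] at hc
          simpa [pow_succ, mul_assoc] using hc
        exact mul_right_cancel₀ hs this
      · refine ⟨c 0, a * s ^ n - ∑ i ∈ Finset.range n, c (i + 1) * (a * s ^ i), h0, ?_⟩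
        have h1 : c 0 * a = a * s ^ (n + 1) - ∑ i ∈ Finset.range n, c (i + 1) * (a * s ^ (i + 1)) := by
          rw [← hc, pow_zero, mul_one]; abel
        rw [h1, sub_mul, Finset.sum_mul]
        simp [pow_succ, mul_assoc]

/-- A (left) Noetherian domain satisfies the left Ore condition. -/
lemma left_ore {S : Type*} [Ring S] [NoZeroDivisors S] [IsNoetherianRing S]
    (a s : S) (ha : a ≠ 0) (hs : s ≠ 0) : ∃ t r : S, t ≠ 0 ∧ t * a = r * s := by
  set f : ℕ →o Submodule S S :=
    ⟨fun n => Submodule.span S (Set.range fun i : Fin n => a * s ^ (i : ℕ)), by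
      intro m n hmn
      apply Submodule.span_mono
      rintro x ⟨i, rfl⟩
      exact ⟨Fin.castLE hmn i, rfl⟩⟩ with hf
  obtain ⟨N, hN⟩ := monotone_stabilizes_iff_noetherian.2 (inferInstance : IsNoetherian S S) f
  have hmem : a * s ^ N ∈ f N := by
    rw [hN (N + 1) (Nat.le_succ N)]
    exact Submodule.subset_span ⟨Fin.last N, rfl⟩
  rw [hf] at hmem
  change a * s ^ N ∈ Submodule.span S (Set.range fun i : Fin N => a * s ^ (i : ℕ)) at hmem
  rw [Submodule.mem_span_range_iff_exists_fun] at hmem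
  obtain ⟨c, hc⟩ := hmem
  apply ore_key a s ha hs N (fun i => if h : i < N then c ⟨i, h⟩ else 0)
  rw [← Fin.sum_univ_eq_sum_range]
  simpa [smul_eq_mul] using hc

/-- A right Noetherian domain satisfies the right Ore condition: for every `a` and every
nonzero `s`, there are `t ≠ 0` and `r` with `a * t = s * r`. Right Noetherianity is
expressed as (left) Noetherianity of the opposite ring. -/
theorem rightNoetherian_domain_ore
    (R : Type*) [Ring R] [Nontrivial R] [NoZeroDivisors R]
    [IsNoetherianRing Rᵐᵒᵖ] :
    ∀ (a s : R), s ≠ 0 → ∃ t r : R, t ≠ 0 ∧ a * t = s * r := by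
  intro a s hs
  by_cases ha : a = 0
  · exact ⟨s, 0, hs, by simp [ha]⟩
  · have ha' : (MulOpposite.op a) ≠ 0 := by simpa using ha
    have hs' : (MulOpposite.op s) ≠ 0 := by simpa using hs
    obtain ⟨t, r, ht, hre⟩ := left_ore (MulOpposite.op a) (MulOpposite.op s) ha' hs'
    refine ⟨t.unop, r.unop, by simpa using ht, ?_⟩
    have := congrArg MulOpposite.unop hre
    simpa using this
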